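/- Let γ ∈ (1/2, 1) and ε ∈ (0,1). Let T be a continuous linear operator on the real Hilbert space L²((ε,1)) (with Lebesgue measure) satisfying, for every g ∈ L²((ε,1)) and almost every x ∈ (ε,1), Tg(x) = ∫_ε^1 (min(x,y))^{−γ} (max(x,y))^{−(1−γ)} g(y) dy. Then the operator norm of T satisfies ‖T‖² ≤ (2/(2γ−1)²) · ε^{1−2γ}. -/

import Mathlib

open MeasureTheory

private lemma aux_cs {μ : Measure ℝ} {f : ℝ → ℝ} (g : Lp ℝ 2 μ) (hf : MemLp f 2 μ) :
    (∫ y, f y * (g : ℝ → ℝ) y ∂μ)^2 ≤ (∫ y, (f y)^2 ∂μ) * (∫ y, ((g : ℝ → ℝ) y)^2 ∂μ) := by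
  set F : Lp ℝ 2 μ := hf.toLp f with hFdef
  have h1 : (inner ℝ F g : ℝ) = ∫ y, f y * (g : ℝ → ℝ) y ∂μ := by
    rw [L2.inner_def]
    refine integral_congr_ae ?_
    filter_upwards [hf.coeFn_toLp] with y hy
    simp [hy, RCLike.inner_apply]
    rw [hFdef, hy, mul_comm]
  have h2 : (inner ℝ F F : ℝ) = ∫ y, (f y)^2 ∂μ := by
    rw [L2.inner_def]
    refine integral_congr_ae ?_
    filter_upwards [hf.coeFn_toLp] with y hy
    simp [hy, RCLike.inner_apply, sq]
    rw [hFdef, hy]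
  have h3 : (inner ℝ g g : ℝ) = ∫ y, ((g : ℝ → ℝ) y)^2 ∂μ := by
    rw [L2.inner_def]
    refine integral_congr_ae ?_
    filter_upwards with y
    simp [RCLike.inner_apply, sq]
  calc (∫ y, f y * (g : ℝ → ℝ) y ∂μ)^2 = (inner ℝ F g : ℝ)^2 := by rw [h1]
    _ ≤ (‖F‖ * ‖g‖)^2 := by
        rw [← sq_abs (inner ℝ F g : ℝ)]
        have h4 := abs_real_inner_le_norm F g
        have h5 : (0:ℝ) ≤ |(inner ℝ F g : ℝ)| := abs_nonneg _
        nlinarith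
    _ = ‖F‖^2 * ‖g‖^2 := by ring
    _ = (∫ y, (f y)^2 ∂μ) * (∫ y, ((g : ℝ → ℝ) y)^2 ∂μ) := by
        rw [← h2, ← h3, real_inner_self_eq_norm_sq, real_inner_self_eq_norm_sq]

private lemma aux_rpow_sq {a : ℝ} (ha : 0 < a) (r : ℝ) : (a ^ r)^2 = a ^ (2*r) := by
  rw [sq, ← Real.rpow_add ha]; ring_nf

/-- For `γ ∈ (1/2, 1)` and `ε ∈ (0,1)`, the preferential-attachment
integral operator `Tg(x) = ∫_ε^1 (x∧y)^{−γ} (x∨y)^{−(1−γ)} g(y) dy` on `L²((ε,1))`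
satisfies `‖T‖² ≤ (2/(2γ−1)²) ε^{1−2γ}`. -/
theorem opNorm_PA_operator_upper (γ ε : ℝ) (hγ : γ ∈ Set.Ioo (1 / 2 : ℝ) 1)
    (hε : ε ∈ Set.Ioo (0 : ℝ) 1)
    (T : Lp ℝ 2 (volume.restrict (Set.Ioo ε 1)) →L[ℝ] Lp ℝ 2 (volume.restrict (Set.Ioo ε 1)))
    (hT : ∀ g : Lp ℝ 2 (volume.restrict (Set.Ioo ε 1)),
      ∀ᵐ x ∂(volume.restrict (Set.Ioo ε 1)),
        (T g : ℝ → ℝ) x = ∫ y in Set.Ioo ε 1,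
          (min x y) ^ (-γ) * (max x y) ^ (-(1 - γ)) * g y) :
    ‖T‖ ^ 2 ≤ 2 / (2 * γ - 1) ^ 2 * ε ^ (1 - 2 * γ) := by
  obtain ⟨hγ1, hγ2⟩ := hγ
  obtain ⟨hε0, hε1⟩ := hε
  have hεle : ε ≤ 1 := hε1.le
  have h2γ : (0:ℝ) < 2*γ - 1 := by linarith
  set M : ℝ := 2 / (2 * γ - 1) ^ 2 * ε ^ (1 - 2 * γ) with hMdef
  have hεpow : (0:ℝ) < ε ^ (1-2*γ) := Real.rpow_pos_of_pos hε0 _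
  have hM0 : 0 ≤ M := by positivity
  set G : ℝ → ℝ := fun x => (ε^(1-2*γ) * x^(2*γ-2) + x^(-(2*γ))) / (2*γ-1) with hGdef
  -- continuity of power functions on [ε,1]
  have hcont : ∀ r : ℝ, ContinuousOn (fun y : ℝ => y ^ r) (Set.Icc ε 1) := by
    intro r
    exact ContinuousOn.rpow_const continuousOn_id
      (fun y hy => Or.inl (ne_of_gt (lt_of_lt_of_le hε0 hy.1)))
  -- continuity of the squared kernel in y, for fixed x
  have hkcont : ∀ x ∈ Set.Ioo ε 1, ContinuousOn
      (fun y : ℝ => ((min x y)^(-γ) * (max x y)^(-(1-γ)))^2) (Set.Icc ε 1) := by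
    intro x hx
    have hmin : ContinuousOn (fun y : ℝ => min x y) (Set.Icc ε 1) :=
      (continuous_const.min continuous_id).continuousOn
    have hmax : ContinuousOn (fun y : ℝ => max x y) (Set.Icc ε 1) :=
      (continuous_const.max continuous_id).continuousOn
    have h1 : ContinuousOn (fun y : ℝ => (min x y)^(-γ)) (Set.Icc ε 1) :=
      hmin.rpow_const (fun y hy => Or.inl (ne_of_gt (lt_min (lt_trans hε0 hx.1)
        (lt_of_lt_of_le hε0 hy.1))))
    have h2 : ContinuousOn (fun y : ℝ => (max x y)^(-(1-γ))) (Set.Icc ε 1) :=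
      hmax.rpow_const (fun y hy => Or.inl (ne_of_gt (lt_max_of_lt_left (lt_trans hε0 hx.1))))
    exact (h1.mul h2).pow 2
  -- the kernel is measurable
  have hkmeas : ∀ x : ℝ, Measurable (fun y : ℝ => (min x y)^(-γ) * (max x y)^(-(1-γ))) := by
    intro x
    exact ((measurable_const.min measurable_id).pow measurable_const).mul
      ((measurable_const.max measurable_id).pow measurable_const)
  -- interval integrability of pure powers
  have hII : ∀ r : ℝ, ∀ a b : ℝ, ε ≤ a → a ≤ b → b ≤ 1 →
      IntervalIntegrable (fun y : ℝ => y ^ r) volume a b := by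
    intro r a b ha hab hb
    refine ((hcont r).mono ?_).intervalIntegrable
    rw [Set.uIcc_of_le hab]
    exact Set.Icc_subset_Icc ha hb
  have hval : ∀ r : ℝ, r ≠ -1 → ∀ a b : ℝ, ε ≤ a → a ≤ b →
      ∫ y in a..b, y ^ r = (b ^ (r+1) - a ^ (r+1)) / (r+1) := by
    intro r hr a b ha hab
    refine integral_rpow (Or.inr ⟨hr, ?_⟩)
    exact Set.notMem_uIcc_of_lt (lt_of_lt_of_le hε0 ha)
      (lt_of_lt_of_le hε0 (le_trans ha hab))
  -- bound on ∫ (kernel x y)^2 dy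
  have hFbound : ∀ x ∈ Set.Ioo ε 1,
      (∫ y in Set.Ioo ε 1, ((min x y)^(-γ) * (max x y)^(-(1-γ)))^2) ≤ G x := by
    intro x hx
    have hx0 : 0 < x := lt_trans hε0 hx.1
    have hxε : ε ≤ x := hx.1.le
    have hx1 : x ≤ 1 := hx.2.le
    have hxpow1 : (0:ℝ) < x ^ (1-2*γ) := Real.rpow_pos_of_pos hx0 _
    have hxpow2 : (0:ℝ) < x ^ (2*γ-2) := Real.rpow_pos_of_pos hx0 _
    have hxpow3 : (0:ℝ) < x ^ (-(2*γ)) := Real.rpow_pos_of_pos hx0 _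
    have hxpow4 : (0:ℝ) < x ^ (2*γ-1) := Real.rpow_pos_of_pos hx0 _
    have key1 : Set.EqOn (fun y : ℝ => ((min x y)^(-γ) * (max x y)^(-(1-γ)))^2)
        (fun y : ℝ => y^(-(2*γ)) * x^(2*γ-2)) (Set.uIcc ε x) := by
      intro y hy
      rw [Set.uIcc_of_le hxε] at hy
      have hy0 : 0 < y := lt_of_lt_of_le hε0 hy.1
      simp only
      rw [min_eq_right hy.2, max_eq_left hy.2, mul_pow, aux_rpow_sq hy0, aux_rpow_sq hx0,
        show (2:ℝ)*(-γ) = -(2*γ) by ring, show (2:ℝ)*(-(1-γ)) = 2*γ-2 by ring]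
    have key2 : Set.EqOn (fun y : ℝ => ((min x y)^(-γ) * (max x y)^(-(1-γ)))^2)
        (fun y : ℝ => x^(-(2*γ)) * y^(2*γ-2)) (Set.uIcc x 1) := by
      intro y hy
      rw [Set.uIcc_of_le hx1] at hy
      have hy0 : 0 < y := lt_of_lt_of_le hx0 hy.1
      simp only
      rw [min_eq_left hy.1, max_eq_right hy.1, mul_pow, aux_rpow_sq hx0, aux_rpow_sq hy0,
        show (2:ℝ)*(-γ) = -(2*γ) by ring, show (2:ℝ)*(-(1-γ)) = 2*γ-2 by ring]
    -- interval integrability of the squared kernel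
    have hki : ∀ a b : ℝ, ε ≤ a → a ≤ b → b ≤ 1 →
        IntervalIntegrable (fun y : ℝ => ((min x y)^(-γ) * (max x y)^(-(1-γ)))^2) volume a b := by
      intro a b ha hab hb
      refine ((hkcont x hx).mono ?_).intervalIntegrable
      rw [Set.uIcc_of_le hab]
      exact Set.Icc_subset_Icc ha hb
    have hsplit : (∫ y in Set.Ioo ε 1, ((min x y)^(-γ) * (max x y)^(-(1-γ)))^2)
        = (∫ y in ε..x, ((min x y)^(-γ) * (max x y)^(-(1-γ)))^2)
          + ∫ y in x..1, ((min x y)^(-γ) * (max x y)^(-(1-γ)))^2 := by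
      rw [← integral_Ioc_eq_integral_Ioo, ← intervalIntegral.integral_of_le hεle,
        ← intervalIntegral.integral_add_adjacent_intervals
          (hki ε x le_rfl hxε hx1) (hki x 1 hxε hx1 le_rfl)]
    have hv1 : (∫ y in ε..x, ((min x y)^(-γ) * (max x y)^(-(1-γ)))^2)
        = ((x ^ (1-2*γ) - ε ^ (1-2*γ)) / (1-2*γ)) * x^(2*γ-2) := by
      rw [intervalIntegral.integral_congr key1, intervalIntegral.integral_mul_const,
        hval (-(2*γ)) (by intro h; nlinarith [h]) ε x le_rfl hxε,
        show -(2*γ) + 1 = 1-2*γ by ring]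
    have hv2 : (∫ y in x..1, ((min x y)^(-γ) * (max x y)^(-(1-γ)))^2)
        = x^(-(2*γ)) * ((1 - x ^ (2*γ-1)) / (2*γ-1)) := by
      rw [intervalIntegral.integral_congr key2, intervalIntegral.integral_const_mul,
        hval (2*γ-2) (by intro h; nlinarith [h]) x 1 hxε hx1,
        show 2*γ-2 + 1 = 2*γ-1 by ring, Real.one_rpow]
    rw [hsplit, hv1, hv2, hGdef]
    have e1 : (x ^ (1-2*γ) - ε ^ (1-2*γ)) / (1-2*γ) = (ε ^ (1-2*γ) - x ^ (1-2*γ)) / (2*γ-1) := by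
      rw [show (1-2*γ) = -(2*γ-1) by ring, div_neg, ← neg_div, neg_sub]
    rw [e1]
    have b1 : (ε ^ (1-2*γ) - x ^ (1-2*γ)) / (2*γ-1) * x^(2*γ-2)
        ≤ ε ^ (1-2*γ) / (2*γ-1) * x^(2*γ-2) := by
      apply mul_le_mul_of_nonneg_right _ hxpow2.le
      exact (div_le_div_iff_of_pos_right h2γ).mpr (by linarith)
    have b2 : x^(-(2*γ)) * ((1 - x ^ (2*γ-1)) / (2*γ-1))
        ≤ x^(-(2*γ)) * (1 / (2*γ-1)) := by
      apply mul_le_mul_of_nonneg_left _ hxpow3.le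
      exact (div_le_div_iff_of_pos_right h2γ).mpr (by linarith)
    calc (ε ^ (1-2*γ) - x ^ (1-2*γ)) / (2*γ-1) * x^(2*γ-2)
          + x^(-(2*γ)) * ((1 - x ^ (2*γ-1)) / (2*γ-1))
        ≤ ε ^ (1-2*γ) / (2*γ-1) * x^(2*γ-2) + x^(-(2*γ)) * (1 / (2*γ-1)) := add_le_add b1 b2
      _ = (ε^(1-2*γ) * x^(2*γ-2) + x^(-(2*γ))) / (2*γ-1) := by ring
  -- integrability of G on (ε,1)
  have hGcont : ContinuousOn G (Set.Icc ε 1) := by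
    rw [hGdef]
    exact ((continuousOn_const.mul (hcont (2*γ-2))).add (hcont (-(2*γ)))).div_const _
  have hGint : IntegrableOn G (Set.Ioo ε 1) volume :=
    (hGcont.integrableOn_Icc).mono_set Set.Ioo_subset_Icc_self
  -- integral of G is at most M
  have hGle : (∫ x in Set.Ioo ε 1, G x) ≤ M := by
    have hεpow2 : (0:ℝ) < ε ^ (2*γ-1) := Real.rpow_pos_of_pos hε0 _
    have hGval : (∫ x in Set.Ioo ε 1, G x)
        = (ε^(1-2*γ) * ((1 - ε^(2*γ-1))/(2*γ-1)) + (ε^(1-2*γ) - 1)/(2*γ-1)) / (2*γ-1) := by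
      rw [← integral_Ioc_eq_integral_Ioo, ← intervalIntegral.integral_of_le hεle]
      simp only [hGdef]
      rw [intervalIntegral.integral_div,
        intervalIntegral.integral_add ((hII (2*γ-2) ε 1 le_rfl hεle le_rfl).const_mul _)
          (hII (-(2*γ)) ε 1 le_rfl hεle le_rfl),
        intervalIntegral.integral_const_mul,
        hval (2*γ-2) (by intro h; nlinarith [h]) ε 1 le_rfl hεle,
        hval (-(2*γ)) (by intro h; nlinarith [h]) ε 1 le_rfl hεle,
        show 2*γ-2 + 1 = 2*γ-1 by ring, show -(2*γ) + 1 = 1-2*γ by ring,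
        Real.one_rpow,
        show ((1:ℝ) ^ (1-2*γ) - ε ^ (1-2*γ)) / (1-2*γ) = (ε ^ (1-2*γ) - 1) / (2*γ-1) by
          rw [Real.one_rpow, show (1-2*γ) = -(2*γ-1) by ring, div_neg, ← neg_div, neg_sub]]
    rw [hGval]
    calc (ε^(1-2*γ) * ((1 - ε^(2*γ-1))/(2*γ-1)) + (ε^(1-2*γ) - 1)/(2*γ-1)) / (2*γ-1)
        = (ε^(1-2*γ) * (1 - ε^(2*γ-1)) + (ε^(1-2*γ) - 1)) / ((2*γ-1) * (2*γ-1)) := by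
          field_simp
      _ ≤ (2 * ε^(1-2*γ)) / ((2*γ-1) * (2*γ-1)) := by
          apply (div_le_div_iff_of_pos_right (by positivity)).mpr
          nlinarith [mul_pos hεpow hεpow2]
      _ = M := by rw [hMdef, sq]; ring
  -- main estimate for each g
  have key : ∀ g : Lp ℝ 2 (volume.restrict (Set.Ioo ε 1)), ‖T g‖^2 ≤ M * ‖g‖^2 := by
    intro g
    have hg2 : (∫ y, ((g : ℝ → ℝ) y)^2 ∂(volume.restrict (Set.Ioo ε 1))) = ‖g‖^2 := by
      rw [← real_inner_self_eq_norm_sq, L2.inner_def]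
      refine integral_congr_ae (Filter.Eventually.of_forall fun y => ?_)
      simp [RCLike.inner_apply, sq]
    have hTg2 : ‖T g‖^2 = ∫ x, ((T g : ℝ → ℝ) x)^2 ∂(volume.restrict (Set.Ioo ε 1)) := by
      rw [← real_inner_self_eq_norm_sq, L2.inner_def]
      refine integral_congr_ae (Filter.Eventually.of_forall fun y => ?_)
      simp [RCLike.inner_apply, sq]
    have hTgsq_int : Integrable (fun x => ((T g : ℝ → ℝ) x)^2) (volume.restrict (Set.Ioo ε 1)) :=
      (Lp.memLp (T g)).integrable_sq
    have hbound : ∀ᵐ x ∂(volume.restrict (Set.Ioo ε 1)), ((T g : ℝ → ℝ) x)^2 ≤ G x * ‖g‖^2 := by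
      filter_upwards [hT g, ae_restrict_mem measurableSet_Ioo] with x hx hmem
      rw [hx]
      have hint : Integrable (fun y => ((min x y)^(-γ) * (max x y)^(-(1-γ)))^2) (volume.restrict (Set.Ioo ε 1)) :=
        ((hkcont x hmem).integrableOn_Icc).mono_set Set.Ioo_subset_Icc_self
      have hf2 : MemLp (fun y => (min x y)^(-γ) * (max x y)^(-(1-γ))) 2 (volume.restrict (Set.Ioo ε 1)) :=
        (memLp_two_iff_integrable_sq (hkmeas x).aestronglyMeasurable).2 hint
      calc (∫ y in Set.Ioo ε 1, (min x y)^(-γ) * (max x y)^(-(1-γ)) * (g : ℝ → ℝ) y)^2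
          ≤ (∫ y, ((min x y)^(-γ) * (max x y)^(-(1-γ)))^2 ∂(volume.restrict (Set.Ioo ε 1)))
              * (∫ y, ((g : ℝ → ℝ) y)^2 ∂(volume.restrict (Set.Ioo ε 1))) := aux_cs g hf2
        _ = (∫ y, ((min x y)^(-γ) * (max x y)^(-(1-γ)))^2 ∂(volume.restrict (Set.Ioo ε 1))) * ‖g‖^2 := by rw [hg2]
        _ ≤ G x * ‖g‖^2 :=
            mul_le_mul_of_nonneg_right (hFbound x hmem) (sq_nonneg _)
    calc ‖T g‖^2 = ∫ x, ((T g : ℝ → ℝ) x)^2 ∂(volume.restrict (Set.Ioo ε 1)) := hTg2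
      _ ≤ ∫ x, G x * ‖g‖^2 ∂(volume.restrict (Set.Ioo ε 1)) := integral_mono_ae hTgsq_int (hGint.mul_const _) hbound
      _ = (∫ x, G x ∂(volume.restrict (Set.Ioo ε 1))) * ‖g‖^2 := integral_mul_const _ _
      _ ≤ M * ‖g‖^2 := mul_le_mul_of_nonneg_right hGle (sq_nonneg _)
  -- conclude
  have hTnorm : ‖T‖ ≤ Real.sqrt M := by
    refine T.opNorm_le_bound (Real.sqrt_nonneg M) (fun g => ?_)
    have h1 : ‖T g‖ = Real.sqrt (‖T g‖^2) := (Real.sqrt_sq (norm_nonneg _)).symm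
    rw [h1]
    calc Real.sqrt (‖T g‖^2) ≤ Real.sqrt (M * ‖g‖^2) := Real.sqrt_le_sqrt (key g)
      _ = Real.sqrt M * ‖g‖ := by
          rw [Real.sqrt_mul hM0, Real.sqrt_sq (norm_nonneg _)]
  calc ‖T‖^2 ≤ (Real.sqrt M)^2 := pow_le_pow_left₀ (norm_nonneg _) hTnorm 2
    _ = M := Real.sq_sqrt hM0
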